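/- arXiv:math/0612172 — 4 statements merged into one kernel-verified Lean document; each statement's English description precedes it below -/
import Mathlib

section
/- The set ℋ_∞ = {a ∈ ℂ : f_a^n(-a) → ∞} is a connected open subset of ℂ. -/
noncomputable def fpoly (d : ℕ) (a : ℂ) (z : ℂ) : ℂ :=
  z ^ (d - 1) * (z + (d : ℂ) * a / ((d : ℂ) - 1))

/-- The escape locus `ℋ_∞`: parameters whose critical orbit tends to infinity. -/
def Hinf (d : ℕ) : Set ℂ :=
  {a : ℂ | Filter.Tendsto (fun n : ℕ => ‖(fpoly d a)^[n] (-a)‖)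
    Filter.atTop Filter.atTop}

open Filter Metric Set

namespace StmtAux

/-- real cast facts -/
lemma hdR {d : ℕ} (hd : 3 ≤ d) : (3 : ℝ) ≤ (d : ℝ) := by exact_mod_cast hd

lemma cast_sub_one_ne {d : ℕ} (hd : 3 ≤ d) : ((d : ℂ) - 1) ≠ 0 := by
  have h : (d : ℂ) ≠ 1 := by
    have : d ≠ 1 := by omega
    exact_mod_cast this
  exact sub_ne_zero.mpr h

lemma abs_cast_sub_one {d : ℕ} (hd : 3 ≤ d) :
    ‖(d : ℂ) - 1‖ = (d : ℝ) - 1 := by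
  have h : ((d : ℂ) - 1) = (((d : ℝ) - 1 : ℝ) : ℂ) := by push_cast; ring
  rw [h, Complex.norm_real, Real.norm_eq_abs, abs_of_nonneg (by linarith [hdR hd])]

/-- The linear coefficient has modulus `d|a|/(d-1) ≤ (3/2)|a|`. -/
lemma abs_coeff_le {d : ℕ} (hd : 3 ≤ d) (a : ℂ) :
    ‖(d : ℂ) * a / ((d : ℂ) - 1)‖ ≤ 3 / 2 * ‖a‖ := by
  rw [norm_div, norm_mul, abs_cast_sub_one hd, Complex.norm_natCast]
  rw [div_le_iff₀ (by linarith [hdR hd])]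
  have := hdR hd
  have h0 : (0 : ℝ) ≤ ‖a‖ := norm_nonneg a
  nlinarith

/-- Growth estimate: outside radius `3|a|+4`, the map at least doubles the modulus. -/
lemma grow {d : ℕ} (hd : 3 ≤ d) (a z : ℂ)
    (hz : 3 * ‖a‖ + 4 ≤ ‖z‖) :
    2 * ‖z‖ ≤ ‖fpoly d a z‖ := by
  have h0 : (0 : ℝ) ≤ ‖a‖ := norm_nonneg a
  have hz4 : (4 : ℝ) ≤ ‖z‖ := by linarith
  have h1 : ‖z‖ / 2 ≤ ‖z + (d : ℂ) * a / ((d : ℂ) - 1)‖ := by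
    have htri : ‖z‖ ≤ ‖z + (d : ℂ) * a / ((d : ℂ) - 1)‖
        + ‖(d : ℂ) * a / ((d : ℂ) - 1)‖ := by
      simpa using norm_add_le (z + (d : ℂ) * a / ((d : ℂ) - 1)) (-((d : ℂ) * a / ((d : ℂ) - 1)))
    have := abs_coeff_le hd a
    linarith
  have h2 : ‖z‖ ^ 2 ≤ ‖z‖ ^ (d - 1) := by
    apply pow_le_pow_right₀ (by linarith)
    omega
  rw [fpoly, norm_mul, norm_pow]
  calc 2 * ‖z‖ ≤ ‖z‖ ^ 2 * (‖z‖ / 2) := by nlinarith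
    _ ≤ ‖z‖ ^ (d - 1) * ‖z + (d : ℂ) * a / ((d : ℂ) - 1)‖ := by
        apply mul_le_mul h2 h1 (by linarith) (by positivity)

/-- Iterated growth. -/
lemma iter_grow {d : ℕ} (hd : 3 ≤ d) (a z : ℂ)
    (hz : 3 * ‖a‖ + 4 ≤ ‖z‖) (n : ℕ) :
    2 ^ n * ‖z‖ ≤ ‖(fpoly d a)^[n] z‖ := by
  induction n with
  | zero => simp
  | succ n ih =>
    have h0 : (0 : ℝ) ≤ ‖a‖ := norm_nonneg a
    have h1 : (1 : ℝ) ≤ 2 ^ n := one_le_pow₀ (by norm_num)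
    have hzn : 3 * ‖a‖ + 4 ≤ ‖(fpoly d a)^[n] z‖ := by
      nlinarith
    rw [Function.iterate_succ_apply']
    have := grow hd a _ hzn
    have : 2 * (2 ^ n * ‖z‖) ≤ ‖fpoly d a ((fpoly d a)^[n] z)‖ := by
      nlinarith
    calc 2 ^ (n + 1) * ‖z‖ = 2 * (2 ^ n * ‖z‖) := by ring
      _ ≤ _ := this

/-- Escape criterion: if some iterate of the critical value exceeds `3|a|+4`, then `a ∈ ℋ_∞`. -/
lemma mem_of_escape {d : ℕ} (hd : 3 ≤ d) (a : ℂ) (n : ℕ)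
    (h : 3 * ‖a‖ + 4 ≤ ‖(fpoly d a)^[n] (-a)‖) :
    a ∈ Hinf d := by
  rw [Hinf, mem_setOf_eq, Filter.tendsto_atTop]
  intro b
  obtain ⟨K, hK⟩ := pow_unbounded_of_one_lt (R := ℝ) b (by norm_num : (1:ℝ) < 2)
  filter_upwards [eventually_ge_atTop (n + K)] with m hm
  have hmn : n ≤ m := by omega
  have key : 2 ^ (m - n) * ‖(fpoly d a)^[n] (-a)‖
      ≤ ‖(fpoly d a)^[m] (-a)‖ := by
    have := iter_grow hd a _ h (m - n)
    rwa [← Function.iterate_add_apply, Nat.sub_add_cancel hmn] at this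
  have h4 : (4 : ℝ) ≤ ‖(fpoly d a)^[n] (-a)‖ := by
    have := norm_nonneg a; linarith
  have hKm : (2 : ℝ) ^ K ≤ 2 ^ (m - n) := by
    apply pow_le_pow_right₀ (by norm_num)
    omega
  have h1 : (1 : ℝ) ≤ 2 ^ K := one_le_pow₀ (by norm_num)
  nlinarith

/-- Non-escaping parameters have uniformly bounded critical orbit. -/
lemma bounded_of_not_mem {d : ℕ} (hd : 3 ≤ d) (a : ℂ) (ha : a ∉ Hinf d) (n : ℕ) :
    ‖(fpoly d a)^[n] (-a)‖ ≤ 3 * ‖a‖ + 4 := by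
  by_contra h
  exact ha (mem_of_escape hd a n (le_of_lt (not_le.mp h)))

/-- The critical orbit as a function of the parameter. -/
noncomputable def F (d n : ℕ) (a : ℂ) : ℂ := (fpoly d a)^[n] (-a)

lemma F_succ (d n : ℕ) (a : ℂ) : F d (n + 1) a = fpoly d a (F d n a) := by
  rw [F, F, Function.iterate_succ_apply']

lemma contF (d n : ℕ) : Continuous (F d n) := by
  induction n with
  | zero => exact (continuous_neg : Continuous fun a : ℂ => -a)
  | succ n ih =>
    have : Continuous fun a => fpoly d a (F d n a) := by
      unfold fpoly
      exact (ih.pow _).mul (ih.add ((continuous_const.mul continuous_id).div_const _))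
    simpa [funext (F_succ d n)] using this

lemma diffF (d n : ℕ) : Differentiable ℂ (F d n) := by
  induction n with
  | zero => exact (differentiable_neg : Differentiable ℂ fun a : ℂ => -a)
  | succ n ih =>
    have : Differentiable ℂ fun a => fpoly d a (F d n a) := by
      unfold fpoly
      exact (ih.pow _).mul (ih.add ((differentiable_const _ |>.mul differentiable_id).div_const _))
    simpa [funext (F_succ d n)] using this


lemma outer_pathConnected (ρ : ℝ) (hρ : 0 ≤ ρ) :
    IsPathConnected {a : ℂ | ρ < ‖a‖} := by
  have hrank : (1 : Cardinal) < Module.rank ℝ ℂ := by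
    rw [Complex.rank_real_complex]; norm_num
  set S := {a : ℂ | ρ < ‖a‖} with hS
  have key : ∀ x ∈ S, ∀ R : ℝ, ‖x‖ ≤ R → JoinedIn S x ((R / ‖x‖) • x) := by
    intro x hx R hR
    have hx0 : 0 < ‖x‖ := lt_of_le_of_lt hρ hx
    have hseg : segment ℝ x ((R / ‖x‖) • x) ⊆ S := by
      intro p hp
      obtain ⟨u, v, hu, hv, huv, hp⟩ := hp
      have hp' : p = (u + v * (R / ‖x‖)) • x := by
        rw [← hp, add_smul, mul_smul]
      have h1 : (1 : ℝ) ≤ R / ‖x‖ := (one_le_div hx0).mpr hR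
      have hc : (1 : ℝ) ≤ u + v * (R / ‖x‖) := by nlinarith
      have hnp : ‖p‖ = |u + v * (R / ‖x‖)| * ‖x‖ := by
        rw [hp', norm_smul, Real.norm_eq_abs]
      rw [hS, mem_setOf_eq, hnp, abs_of_nonneg (by linarith)]
      nlinarith [hx.out]
    have hpc : IsPathConnected (segment ℝ x ((R / ‖x‖) • x)) :=
      (convex_segment _ _).isPathConnected ⟨x, left_mem_segment _ _ _⟩
    exact (hpc.joinedIn x (left_mem_segment _ _ _) _ (right_mem_segment _ _ _)).mono hseg
  have hscaled : ∀ x ∈ S, ∀ R : ℝ, ‖x‖ ≤ R → (R / ‖x‖) • x ∈ sphere (0 : ℂ) R := by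
    intro x hx R hR
    have hx0 : 0 < ‖x‖ := lt_of_le_of_lt hρ hx
    rw [mem_sphere_zero_iff_norm, norm_smul, Real.norm_eq_abs,
      abs_of_nonneg (div_nonneg (le_trans hx0.le hR) hx0.le), div_mul_cancel₀ _ hx0.ne']
  have hb : (↑(ρ + 1) : ℂ) ∈ S := by
    rw [hS, mem_setOf_eq, Complex.norm_real, Real.norm_of_nonneg (by linarith)]
    linarith
  refine ⟨_, hb, ?_⟩
  intro y hy
  set R := max ‖(↑(ρ + 1) : ℂ)‖ ‖y‖ with hR
  have hR0 : 0 ≤ R := le_trans (norm_nonneg _) (le_max_left _ _)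
  have hsub : sphere (0 : ℂ) R ⊆ S := by
    intro z hz
    rw [mem_sphere_zero_iff_norm] at hz
    rw [hS, mem_setOf_eq, hz]
    exact lt_of_lt_of_le hb.out (le_max_left _ _)
  have hj1 := key _ hb R (le_max_left _ _)
  have hj2 := key _ hy R (le_max_right _ _)
  have hjs : JoinedIn S ((R / ‖(↑(ρ + 1) : ℂ)‖) • (↑(ρ + 1) : ℂ)) ((R / ‖y‖) • y) := by
    exact ((isPathConnected_sphere hrank (0 : ℂ) hR0).joinedIn _
      (hscaled _ hb R (le_max_left _ _)) _ (hscaled _ hy R (le_max_right _ _))).mono hsub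
  exact (hj1.trans hjs).trans hj2.symm

end StmtAux


/-- `ℋ_∞` is a connected open subset of `ℂ`. -/
theorem stmt5 (d : ℕ) (hd : 3 ≤ d) :
    IsOpen (Hinf d) ∧ IsConnected (Hinf d) := by
  classical
  have hdR : (3 : ℝ) ≤ (d : ℝ) := StmtAux.hdR hd
  -- Openness
  have hopen : IsOpen (Hinf d) := by
    have heq : Hinf d
        = ⋃ n : ℕ, {a : ℂ | 3 * ‖a‖ + 4 < ‖StmtAux.F d n a‖} := by
      ext a
      constructor
      · intro ha
        rw [Hinf, mem_setOf_eq, Filter.tendsto_atTop] at ha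
        obtain ⟨n, hn⟩ := (ha (3 * ‖a‖ + 5)).exists
        exact mem_iUnion.mpr ⟨n, by simp only [mem_setOf_eq, StmtAux.F]; linarith⟩
      · intro ha
        obtain ⟨n, hn⟩ := mem_iUnion.mp ha
        exact StmtAux.mem_of_escape hd a n (le_of_lt hn)
    rw [heq]
    refine isOpen_iUnion fun n => isOpen_lt ?_ ?_
    · exact (continuous_const.mul continuous_norm).add continuous_const
    · exact continuous_norm.comp (StmtAux.contF d n)
  -- Large parameters escape
  have hbig : ∀ a : ℂ, (d : ℝ) + 4 ≤ ‖a‖ → a ∈ Hinf d := by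
    intro a ha
    apply StmtAux.mem_of_escape hd a 1
    have hne := StmtAux.cast_sub_one_ne hd
    have hF1 : (fpoly d a)^[1] (-a) = (-a) ^ (d - 1) * (a / ((d : ℂ) - 1)) := by
      simp only [Function.iterate_one, fpoly]
      congr 1
      field_simp
      ring
    rw [hF1, norm_mul, norm_pow, norm_neg, norm_div, StmtAux.abs_cast_sub_one hd]
    set r := ‖a‖ with hr
    have hr1 : (1 : ℝ) ≤ r := by linarith
    have hpow : r ^ (d - 1) * (r / ((d : ℝ) - 1)) = r ^ d / ((d : ℝ) - 1) := by
      rw [← mul_div_assoc, ← pow_succ]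
      congr 2
      omega
    rw [hpow, le_div_iff₀ (by linarith : (0 : ℝ) < (d : ℝ) - 1)]
    have h3d : r ^ 3 ≤ r ^ d := pow_le_pow_right₀ hr1 (by omega)
    nlinarith [sq_nonneg r, sq_nonneg (r - 4)]
  -- Base point and its component
  set a0 : ℂ := (((d : ℝ) + 5 : ℝ) : ℂ) with ha0def
  have ha0abs : ‖a0‖ = (d : ℝ) + 5 := by
    rw [ha0def, Complex.norm_real, Real.norm_eq_abs, abs_of_nonneg (by linarith)]
  have ha0 : a0 ∈ Hinf d := hbig a0 (by rw [ha0abs]; linarith)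
  set U0 := connectedComponentIn (Hinf d) a0 with hU0def
  -- The outer region is contained in U0
  set E := {a : ℂ | (d : ℝ) + 4 < ‖a‖} with hEdef
  have hEsub : E ⊆ Hinf d := fun a ha =>
    hbig a (by exact le_of_lt ha)
  have hEpc : IsPathConnected E := StmtAux.outer_pathConnected _ (by linarith)
  have ha0E : a0 ∈ E := by
    rw [hEdef, mem_setOf_eq, ha0abs]; linarith
  have hEU0 : E ⊆ U0 :=
    hEpc.isConnected.isPreconnected.subset_connectedComponentIn ha0E hEsub
  -- Every escaping parameter lies in U0
  have hmain : Hinf d ⊆ U0 := by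
    intro b hb
    by_contra hbU0
    set U := connectedComponentIn (Hinf d) b with hUdef
    have hbU : b ∈ U := mem_connectedComponentIn hb
    have hUopen : IsOpen U := hopen.connectedComponentIn
    -- U avoids the outer region, hence is bounded
    have hUball : U ⊆ Metric.closedBall (0 : ℂ) ((d : ℝ) + 4) := by
      intro x hxU
      by_contra hx
      have hxE : x ∈ E := by
        rw [hEdef, mem_setOf_eq]
        rw [Metric.mem_closedBall, dist_zero_right] at hx
        linarith [not_le.mp hx]
      have h1 : U = connectedComponentIn (Hinf d) x := connectedComponentIn_eq hxU
      have h2 : U0 = connectedComponentIn (Hinf d) x := connectedComponentIn_eq (hEU0 hxE)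
      exact hbU0 (h2 ▸ h1 ▸ hbU)
    have hUbounded : Bornology.IsBounded U :=
      (Metric.isBounded_closedBall).subset hUball
    -- the frontier of U avoids the escape locus
    have hfr : ∀ x ∈ frontier U, x ∉ Hinf d := by
      intro x hx hxH
      have hxnU : x ∉ U := by
        rw [hUopen.frontier_eq] at hx
        exact hx.2
      have hxcl : x ∈ closure U := frontier_subset_closure hx
      set V := connectedComponentIn (Hinf d) x with hVdef
      have hVopen : IsOpen V := hopen.connectedComponentIn
      have hxV : x ∈ V := mem_connectedComponentIn hxH
      obtain ⟨y, hyV, hyU⟩ := _root_.mem_closure_iff.mp hxcl V hVopen hxV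
      have h1 : V = connectedComponentIn (Hinf d) y := connectedComponentIn_eq hyV
      have h2 : U = connectedComponentIn (Hinf d) y := connectedComponentIn_eq hyU
      exact hxnU (h2 ▸ h1 ▸ hxV)
    -- uniform bound on the critical orbit over the frontier
    have hfrM : ∀ x ∈ frontier U, ∀ n : ℕ,
        ‖StmtAux.F d n x‖ ≤ 3 * ((d : ℝ) + 4) + 4 := by
      intro x hx n
      have hxball : x ∈ Metric.closedBall (0 : ℂ) ((d : ℝ) + 4) :=
        closure_minimal hUball Metric.isClosed_closedBall (frontier_subset_closure hx)
      rw [Metric.mem_closedBall, dist_zero_right] at hxball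
      have := StmtAux.bounded_of_not_mem hd x (hfr x hx) n
      calc ‖StmtAux.F d n x‖ ≤ 3 * ‖x‖ + 4 := this
        _ ≤ 3 * ((d : ℝ) + 4) + 4 := by linarith
    -- but the orbit of b escapes beyond this bound : contradiction via max modulus
    have hbT : Filter.Tendsto (fun n : ℕ => ‖(fpoly d b)^[n] (-b)‖)
        Filter.atTop Filter.atTop := hb
    obtain ⟨N, hN⟩ := (Filter.tendsto_atTop.mp hbT (3 * ((d : ℝ) + 4) + 5)).exists
    have hmax : ‖StmtAux.F d N b‖ ≤ 3 * ((d : ℝ) + 4) + 4 := by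
      refine Complex.norm_le_of_forall_mem_frontier_norm_le hUbounded
        ((StmtAux.diffF d N).diffContOnCl) (fun z hz => ?_) (subset_closure hbU)
      exact hfrM z hz N
    have : ‖StmtAux.F d N b‖ = ‖(fpoly d b)^[N] (-b)‖ := rfl
    linarith [this ▸ hmax, hN]
  refine ⟨hopen, ⟨a0, ha0⟩, ?_⟩
  have : Hinf d = U0 := le_antisymm hmain (connectedComponentIn_subset _ _)
  rw [this]
  exact isPreconnected_connectedComponentIn
end

section
/- It is impossible that the critical value f_a(-a) lies in the immediate basin B_a of 0 while the critical point -a does not: if f_a(-a) ∈ B_a then -a ∈ B_a. -/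
def basin (d : ℕ) (a : ℂ) : Set ℂ :=
  {z : ℂ | Filter.Tendsto (fun n : ℕ => (fpoly d a)^[n] z) Filter.atTop (nhds 0)}

def immBasin (d : ℕ) (a : ℂ) : Set ℂ := connectedComponentIn (basin d a) 0

open Filter Set Metric Polynomial Complex Topology

namespace Stmt8

variable {d : ℕ} {a : ℂ}

/-- the constant c -/
noncomputable def cc (d : ℕ) (a : ℂ) : ℂ := (d : ℂ) * a / ((d : ℂ) - 1)

lemma dC_ne (hd : 3 ≤ d) : ((d : ℂ) - 1) ≠ 0 := by
  rw [sub_ne_zero]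
  intro h
  have : d = 1 := Nat.cast_injective (by exact_mod_cast h)
  omega

lemma fpoly_eq (z : ℂ) : fpoly d a z = z ^ (d - 1) * (z + cc d a) := rfl

lemma cc_mul (hd : 3 ≤ d) : ((d : ℂ) - 1) * cc d a = (d : ℂ) * a := by
  rw [cc, mul_div_cancel₀]
  exact dC_ne hd

lemma fpoly_zero (hd : 3 ≤ d) : fpoly d a 0 = 0 := by
  have : d - 1 ≠ 0 := by omega
  simp [fpoly, zero_pow this]

lemma continuous_fpoly : Continuous (fpoly d a) := by
  unfold fpoly; fun_prop

lemma hasStrictDerivAt_fpoly (hd : 3 ≤ d) (z : ℂ) :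
    HasStrictDerivAt (fpoly d a) ((d : ℂ) * z ^ (d - 2) * (z + a)) z := by
  have h := ((hasStrictDerivAt_pow (d - 1) z).mul
    ((hasStrictDerivAt_id z).add_const (cc d a)))
  refine h.congr_deriv (Eq.symm ?_)
  have h1 : ((d - 1 : ℕ) : ℂ) = (d : ℂ) - 1 := by
    push_cast [Nat.cast_sub (by omega : 1 ≤ d)]; ring
  have h2 : z ^ (d - 1) = z ^ (d - 2) * z := by
    rw [← pow_succ]; congr 1; omega
  have h3 : z ^ (d - 1 - 1) = z ^ (d - 2) := by congr 1
  have h4 := cc_mul (a := a) hd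
  rw [h1, h2, h3, mul_one]
  simp only [id_eq]
  linear_combination (-(z ^ (d - 2))) * h4
  
lemma mem_basin_iff {z : ℂ} :
    z ∈ basin d a ↔ Tendsto (fun n : ℕ => (fpoly d a)^[n] z) atTop (nhds 0) := Iff.rfl

lemma fpoly_mem_basin_iff {z : ℂ} : fpoly d a z ∈ basin d a ↔ z ∈ basin d a := by
  have hiter : (fun n : ℕ => (fpoly d a)^[n] (fpoly d a z))
      = fun n : ℕ => (fpoly d a)^[n + 1] z := by
    funext n; rw [Function.iterate_succ_apply]
  rw [mem_basin_iff, mem_basin_iff, hiter]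
  exact tendsto_add_atTop_iff_nat (f := fun n : ℕ => (fpoly d a)^[n] z) 1

lemma iterate_mem_basin_iff {z : ℂ} (n : ℕ) :
    (fpoly d a)^[n] z ∈ basin d a ↔ z ∈ basin d a := by
  induction n with
  | zero => rfl
  | succ n ih => rw [Function.iterate_succ_apply', fpoly_mem_basin_iff, ih]

lemma contraction (hd : 3 ≤ d) :
    ∃ r > 0, ∀ z : ℂ, ‖z‖ ≤ r → ‖fpoly d a z‖ ≤ ‖z‖ / 2 := by
  set C := ‖cc d a‖ with hC
  have hCpos : 0 < 1 + C := by positivity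
  refine ⟨min 1 (1 / (2 * (1 + C))), by positivity, fun z hz => ?_⟩
  have h0 : (0 : ℝ) ≤ ‖z‖ := norm_nonneg z
  have hz1 : ‖z‖ ≤ 1 := hz.trans (min_le_left _ _)
  have hz2 : ‖z‖ ≤ 1 / (2 * (1 + C)) := hz.trans (min_le_right _ _)
  have key : ‖fpoly d a z‖ ≤ ‖z‖ * ‖z‖ * (1 + C) := by
    calc ‖fpoly d a z‖ = ‖z‖ ^ (d - 1) * ‖z + cc d a‖ := by
          rw [fpoly_eq, norm_mul, norm_pow]
      _ ≤ ‖z‖ ^ (d - 1) * (1 + C) := by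
          gcongr
          calc ‖z + cc d a‖ ≤ ‖z‖ + C := norm_add_le _ _
            _ ≤ 1 + C := by linarith
      _ ≤ ‖z‖ ^ 2 * (1 + C) := by
          apply mul_le_mul_of_nonneg_right _ hCpos.le
          exact pow_le_pow_of_le_one h0 hz1 (by omega)
      _ = ‖z‖ * ‖z‖ * (1 + C) := by ring
  have : ‖z‖ * ‖z‖ * (1 + C) ≤ ‖z‖ * (1 / (2 * (1 + C))) * (1 + C) := by gcongr
  have heq : ‖z‖ * (1 / (2 * (1 + C))) * (1 + C) = ‖z‖ / 2 := by
    field_simp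
  linarith [key, this, heq ▸ this]

lemma basin_radius (hd : 3 ≤ d) :
    ∃ r > 0, ∀ z : ℂ, ‖z‖ ≤ r → z ∈ basin d a := by
  obtain ⟨r, hr, hcon⟩ := contraction (a := a) hd
  refine ⟨r, hr, fun z hz => ?_⟩
  have hbound : ∀ n : ℕ, ‖(fpoly d a)^[n] z‖ ≤ ‖z‖ / 2 ^ n := by
    intro n
    induction n with
    | zero => simp
    | succ n ih =>
      have hle : ‖(fpoly d a)^[n] z‖ ≤ r := by
        refine ih.trans (le_trans ?_ hz)
        apply div_le_self (norm_nonneg z) (one_le_pow₀ (by norm_num))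
      rw [Function.iterate_succ_apply']
      calc ‖fpoly d a ((fpoly d a)^[n] z)‖ ≤ ‖(fpoly d a)^[n] z‖ / 2 := hcon _ hle
        _ ≤ ‖z‖ / 2 ^ n / 2 := by linarith
        _ = ‖z‖ / 2 ^ (n + 1) := by ring
  rw [mem_basin_iff, tendsto_zero_iff_norm_tendsto_zero]
  apply squeeze_zero (fun n => norm_nonneg _) hbound
  have : Tendsto (fun n : ℕ => ‖z‖ * (1 / 2 : ℝ) ^ n) atTop (nhds (‖z‖ * 0)) :=
    Filter.Tendsto.const_mul _ (tendsto_pow_atTop_nhds_zero_of_lt_one (by norm_num) (by norm_num))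
  simpa [div_eq_mul_inv, inv_pow] using this

lemma isOpen_basin (hd : 3 ≤ d) : IsOpen (basin d a) := by
  obtain ⟨r, hr, hball⟩ := basin_radius (a := a) hd
  have : basin d a = ⋃ n : ℕ, (fpoly d a)^[n] ⁻¹' (ball 0 r) := by
    ext z
    simp only [mem_iUnion, mem_preimage, mem_ball, dist_zero_right]
    constructor
    · intro hz
      obtain ⟨n, hn⟩ := ((mem_basin_iff.mp hz).eventually_mem
        (Metric.ball_mem_nhds (0 : ℂ) hr)).exists
      exact ⟨n, by simpa [dist_zero_right] using hn⟩
    · rintro ⟨n, hn⟩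
      exact (iterate_mem_basin_iff n).mp (hball _ hn.le)
  rw [this]
  exact isOpen_iUnion fun n =>
    ((continuous_fpoly.iterate n).isOpen_preimage _ isOpen_ball)

lemma zero_mem_basin (hd : 3 ≤ d) : (0 : ℂ) ∈ basin d a := by
  rw [mem_basin_iff]
  have hfix : ∀ n : ℕ, (fpoly d a)^[n] (0 : ℂ) = 0 := fun n =>
    Function.iterate_fixed (fpoly_zero hd) n
  simp only [hfix]
  exact tendsto_const_nhds

lemma zero_mem_immBasin (hd : 3 ≤ d) : (0 : ℂ) ∈ immBasin (d := d) a :=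
  mem_connectedComponentIn (zero_mem_basin hd)

lemma isOpen_immBasin (hd : 3 ≤ d) : IsOpen (immBasin d a) :=
  (isOpen_basin hd).connectedComponentIn

lemma immBasin_subset : immBasin d a ⊆ basin d a := connectedComponentIn_subset _ _

lemma subset_immBasin (hd : 3 ≤ d) {S : Set ℂ} (hS : IsPreconnected S) (h0 : (0 : ℂ) ∈ S)
    (hsub : S ⊆ basin d a) : S ⊆ immBasin d a :=
  hS.subset_connectedComponentIn h0 hsub

lemma mem_immBasin_of_closure (hd : 3 ≤ d) {z : ℂ} (hz : z ∈ basin d a)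
    (hc : z ∈ closure (immBasin d a)) : z ∈ immBasin d a := by
  set W := connectedComponentIn (basin d a) z with hW
  have hWopen : IsOpen W := (isOpen_basin hd).connectedComponentIn
  have hzW : z ∈ W := mem_connectedComponentIn hz
  obtain ⟨y, hyW, hyV⟩ := _root_.mem_closure_iff.mp hc W hWopen hzW
  have hunion : IsPreconnected (W ∪ immBasin d a) :=
    IsPreconnected.union y hyW hyV isPreconnected_connectedComponentIn
      isPreconnected_connectedComponentIn
  have hsub : W ∪ immBasin d a ⊆ immBasin d a :=
    subset_immBasin hd hunion (Or.inr (zero_mem_immBasin hd))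
      (union_subset (connectedComponentIn_subset _ _) immBasin_subset)
  exact hsub (Or.inl hzW)

lemma loc_surj {g : ℂ → ℂ} {g' z₀ : ℂ} (hg : HasStrictDerivAt g g' z₀) (h' : g' ≠ 0)
    {ε : ℝ} (hε : 0 < ε) : ∃ ρ > 0, ∀ w ∈ ball (g z₀) ρ, ∃ z ∈ ball z₀ ε, g z = w := by
  have hmap := hg.map_nhds_eq h'
  have himg : g '' ball z₀ ε ∈ 𝓝 (g z₀) := by
    rw [← hmap]
    exact image_mem_map (ball_mem_nhds z₀ hε)
  obtain ⟨ρ, hρ, hsub⟩ := Metric.mem_nhds_iff.mp himg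
  exact ⟨ρ, hρ, fun w hw => by
    obtain ⟨z, hz, hgz⟩ := hsub hw
    exact ⟨z, hz, hgz⟩⟩

lemma loc_inj {g : ℂ → ℂ} {g' z₀ : ℂ} (hg : HasStrictDerivAt g g' z₀) (h' : g' ≠ 0) :
    ∃ ρ > 0, InjOn g (ball z₀ ρ) := by
  have h := hg.hasStrictFDerivAt_equiv h'
  have hsrc : (h.toOpenPartialHomeomorph g).source ∈ 𝓝 z₀ :=
    (h.toOpenPartialHomeomorph g).open_source.mem_nhds h.mem_toOpenPartialHomeomorph_source
  obtain ⟨ρ, hρ, hsub⟩ := Metric.mem_nhds_iff.mp hsrc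
  refine ⟨ρ, hρ, fun x hx y hy hxy => ?_⟩
  exact (h.toOpenPartialHomeomorph g).injOn (hsub hx) (hsub hy) (by simpa using hxy)

lemma nth_roots_exist {k : ℕ} (hk : 1 ≤ k) {w : ℂ} (hw : w ≠ 0) :
    ∃ s : Fin k → ℂ, Function.Injective s ∧ ∀ i, (s i) ^ k = w := by
  obtain ⟨s₀, hs₀⟩ := IsAlgClosed.exists_pow_nat_eq w (show 0 < k by omega)
  have hs₀ne : s₀ ≠ 0 := by
    intro h; apply hw; rw [← hs₀, h, zero_pow (by omega : k ≠ 0)]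
  have hζ := Complex.isPrimitiveRoot_exp k (by omega)
  set ζ := Complex.exp (2 * Real.pi * I / k) with hζdef
  refine ⟨fun i => s₀ * ζ ^ (i : ℕ), fun i j hij => ?_, fun i => ?_⟩
  · have : ζ ^ (i : ℕ) = ζ ^ (j : ℕ) := by
      field_simp [hs₀ne] at hij; exact hij
    exact Fin.ext (hζ.pow_inj i.isLt j.isLt this)
  · rw [mul_pow, ← pow_mul, mul_comm (i : ℕ) k, pow_mul, hζ.pow_eq_one, one_pow, mul_one, hs₀]

lemma cc_ne (hd : 3 ≤ d) (ha : a ≠ 0) : cc d a ≠ 0 := by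
  apply div_ne_zero (mul_ne_zero _ ha) (dC_ne hd)
  exact_mod_cast Nat.cast_ne_zero.mpr (by omega : d ≠ 0)

lemma preimages_near_zero (hd : 3 ≤ d) (ha : a ≠ 0) {ε : ℝ} (hε : 0 < ε) :
    ∃ δ > 0, ∀ w : ℂ, w ≠ 0 → ‖w‖ < δ → ∃ zs : Fin (d - 1) → ℂ,
      Function.Injective zs ∧ ∀ i, zs i ∈ ball (0 : ℂ) ε ∧ fpoly d a (zs i) = w := by
  set c := cc d a with hc
  have hcne : c ≠ 0 := cc_ne hd ha
  set k := d - 1 with hkdef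
  have hk : 1 ≤ k := by omega
  have hκ : ((k : ℕ) : ℂ) ≠ 0 := Nat.cast_ne_zero.mpr (by omega)
  obtain ⟨μ, hμ⟩ := IsAlgClosed.exists_pow_nat_eq c (show 0 < k by omega)
  have hμne : μ ≠ 0 := by
    intro h; apply hcne; rw [← hμ, h, zero_pow (by omega : k ≠ 0)]
  set E : ℂ → ℂ := fun z => Complex.exp (((k : ℂ))⁻¹ * Complex.log ((z + c) / c)) with hE
  set Φ : ℂ → ℂ := fun z => z * μ * E z with hΦ
  have hE0 : E 0 = 1 := by
    simp only [hE, zero_add, div_self hcne, Complex.log_one, mul_zero, Complex.exp_zero]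
  -- key identity
  have hkey : ∀ z : ℂ, ‖z‖ < ‖c‖ → Φ z ^ k = fpoly d a z := by
    intro z hz
    have hzc : z + c ≠ 0 := by
      intro h
      have : z = -c := by linear_combination h
      rw [this, norm_neg] at hz; exact lt_irrefl _ hz
    have hx : (z + c) / c ≠ 0 := div_ne_zero hzc hcne
    have hEk : E z ^ k = (z + c) / c := by
      rw [hE]
      rw [← Complex.exp_nat_mul]
      rw [show (k : ℂ) * (((k : ℂ))⁻¹ * Complex.log ((z + c) / c)) = Complex.log ((z + c) / c) by
        field_simp]
      exact Complex.exp_log hx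
    calc Φ z ^ k = z ^ k * μ ^ k * E z ^ k := by rw [hΦ]; ring
      _ = z ^ k * c * ((z + c) / c) := by rw [hμ, hEk]
      _ = z ^ k * (z + c) := by field_simp
      _ = fpoly d a z := by rw [fpoly_eq]
  -- strict derivative of Φ at 0
  have hΦ0 : Φ 0 = 0 := by simp [hΦ]
  have hder : HasStrictDerivAt Φ μ 0 := by
    have h1 : HasStrictDerivAt (fun z : ℂ => (z + c) / c) (1 / c) 0 :=
      ((hasStrictDerivAt_id (0 : ℂ)).add_const c).div_const c
    have hval : ((0 : ℂ) + c) / c = 1 := by rw [zero_add, div_self hcne]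
    have h2 := h1.clog (by rw [hval]; exact Complex.one_mem_slitPlane)
    have h3 := h2.const_mul (((k : ℂ))⁻¹)
    have h4 := h3.cexp
    have h5 := ((hasStrictDerivAt_id (0 : ℂ)).mul_const μ).mul h4
    have : Φ = fun z => (id z * μ) * E z := by funext z; simp [hΦ, hE]
    rw [this]
    refine h5.congr_deriv (Eq.symm ?_)
    have : (fun z : ℂ => Complex.exp ((((k : ℕ) : ℂ))⁻¹ *
        Complex.log ((z + c) / c))) 0 = 1 := hE0
    rw [show Complex.exp ((((k : ℕ) : ℂ))⁻¹ * Complex.log (((0 : ℂ) + c) / c)) = 1 from hE0]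
    simp
  set ε' := min ε (‖c‖ / 2) with hε'
  have hε'pos : 0 < ε' := lt_min hε (by have := norm_pos_iff.mpr hcne; linarith)
  obtain ⟨ρ, hρpos, hρ⟩ := loc_surj hder hμne hε'pos
  refine ⟨ρ ^ k, pow_pos hρpos k, fun w hw hwρ => ?_⟩
  obtain ⟨s, hsinj, hsk⟩ := nth_roots_exist hk hw
  have hsball : ∀ i, s i ∈ ball (Φ 0) ρ := by
    intro i
    rw [hΦ0, mem_ball, dist_zero_right]
    by_contra hcon
    push_neg at hcon
    have : ρ ^ k ≤ ‖s i‖ ^ k := pow_le_pow_left₀ hρpos.le hcon k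
    rw [← norm_pow, hsk i] at this
    linarith
  choose zs hzball hzΦ using fun i => hρ (s i) (hsball i)
  refine ⟨zs, fun i j hij => hsinj (by rw [← hzΦ i, ← hzΦ j, hij]), fun i => ?_⟩
  have hz' : zs i ∈ ball (0 : ℂ) ε' := hzball i
  have hznorm : ‖zs i‖ < ‖c‖ := by
    have := mem_ball.mp hz'
    rw [dist_zero_right] at this
    have h2 : ε' ≤ ‖c‖ / 2 := min_le_right _ _
    have : ‖c‖ / 2 < ‖c‖ := by
      have : 0 < ‖c‖ := norm_pos_iff.mpr hcne
      linarith
    linarith [mem_ball.mp hz', min_le_right ε (‖c‖/2)]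
  constructor
  · exact ball_subset_ball (min_le_left _ _) hz'
  · rw [← hkey _ hznorm, hzΦ i, hsk i]

noncomputable def Fp (d : ℕ) (a : ℂ) : ℂ[X] := X ^ (d - 1) * (X + C (cc d a))

lemma eval_Fp (z : ℂ) : (Fp d a).eval z = fpoly d a z := by
  simp [Fp, fpoly_eq]

lemma monic_Fp : (Fp d a).Monic := (monic_X_pow _).mul (monic_X_add_C _)

lemma natDegree_Fp (hd : 3 ≤ d) : (Fp d a).natDegree = d := by
  rw [Fp, Polynomial.Monic.natDegree_mul (monic_X_pow _) (monic_X_add_C _),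
    natDegree_X_pow, natDegree_X_add_C]
  omega

lemma deriv_Fp_eval (hd : 3 ≤ d) (z : ℂ) :
    (derivative (Fp d a)).eval z = (d : ℂ) * z ^ (d - 2) * (z + a) := by
  have hfun : (fun z : ℂ => (Fp d a).eval z) = fpoly d a := funext eval_Fp
  have h2 := (hasStrictDerivAt_fpoly (a := a) hd z).hasDerivAt
  rw [← hfun] at h2
  exact ((Fp d a).hasDerivAt z).unique h2

lemma root_count (hd : 3 ≤ d) (ha : a ≠ 0) {zs : Fin (d - 1) → ℂ}
    (hinj : Function.Injective zs) (hroot : ∀ i, fpoly d a (zs i) = fpoly d a (-a))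
    (hne : ∀ i, zs i ≠ -a) : False := by
  set v := fpoly d a (-a) with hv
  set T : ℂ[X] := Fp d a - C v with hT
  have hdegC : (C v).degree < (Fp d a).degree := by
    apply lt_of_le_of_lt degree_C_le
    rw [degree_eq_natDegree (monic_Fp (d := d) (a := a)).ne_zero, natDegree_Fp hd]
    exact_mod_cast (by omega : 0 < d)
  have hTmonic : T.Monic := (monic_Fp).sub_of_left hdegC
  have hTne : T ≠ 0 := hTmonic.ne_zero
  have hTdeg : T.natDegree = d := by
    rw [hT, natDegree_sub_C, natDegree_Fp hd]
  have hTeval : ∀ z : ℂ, T.eval z = fpoly d a z - v := by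
    intro z; simp [hT, eval_Fp]
  have hroot_a : T.IsRoot (-a) := by simp [IsRoot, hTeval, hv]
  have hderivT : (derivative T).IsRoot (-a) := by
    have : derivative T = derivative (Fp d a) := by simp [hT]
    rw [IsRoot, this, deriv_Fp_eval hd]
    simp
  have hmult2 : 1 < T.rootMultiplicity (-a) :=
    (one_lt_rootMultiplicity_iff_isRoot hTne).mpr ⟨hroot_a, hderivT⟩
  classical
  set S : Finset ℂ := Finset.image zs Finset.univ with hS
  have hScard : S.card = d - 1 := by
    rw [hS, Finset.card_image_of_injective _ hinj, Finset.card_univ, Fintype.card_fin]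
  have haS : -a ∉ S := by
    simp only [hS, Finset.mem_image, Finset.mem_univ, true_and, not_exists]
    exact fun i h => hne i h
  have hSroot : ∀ z ∈ S, T.IsRoot z := by
    intro z hz
    obtain ⟨i, _, rfl⟩ := Finset.mem_image.mp hz
    rw [IsRoot, hTeval, hroot i, hv, sub_self]
  have hsubset : insert (-a) S ⊆ T.roots.toFinset := by
    intro z hz
    rw [Multiset.mem_toFinset, mem_roots hTne]
    rcases Finset.mem_insert.mp hz with h | h
    · exact h ▸ hroot_a
    · exact hSroot z h
  have hsum : ∑ z ∈ insert (-a) S, T.roots.count z ≤ Multiset.card T.roots := by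
    rw [← T.roots.toFinset_sum_count_eq]
    exact Finset.sum_le_sum_of_subset hsubset
  have h1 : ∑ z ∈ insert (-a) S, T.roots.count z
      = T.roots.count (-a) + ∑ z ∈ S, T.roots.count z := Finset.sum_insert haS
  have h2 : 2 ≤ T.roots.count (-a) := by rw [count_roots]; omega
  have h3 : d - 1 ≤ ∑ z ∈ S, T.roots.count z := by
    calc d - 1 = ∑ _z ∈ S, 1 := by
          rw [Finset.sum_const, smul_eq_mul, mul_one, hScard]
      _ ≤ ∑ z ∈ S, T.roots.count z := by
          apply Finset.sum_le_sum
          intro z hz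
          rw [count_roots]
          exact (rootMultiplicity_pos hTne).mpr (hSroot z hz)
  have h4 : Multiset.card T.roots ≤ d := hTdeg ▸ T.card_roots'
  omega

lemma deriv_ne (hd : 3 ≤ d) {z : ℂ} (hz0 : z ≠ 0) (hza : z ≠ -a) :
    (d : ℂ) * z ^ (d - 2) * (z + a) ≠ 0 := by
  apply mul_ne_zero (mul_ne_zero _ (pow_ne_zero _ hz0))
  · intro h
    apply hza
    linear_combination h
  · exact Nat.cast_ne_zero.mpr (by omega)

lemma preimage_bound (hd : 3 ≤ d) (M : ℝ) :
    ∃ R > 0, ∀ z : ℂ, ‖fpoly d a z‖ ≤ M → ‖z‖ ≤ R := by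
  set C := ‖cc d a‖ with hC
  refine ⟨max 1 (C + M + 1), lt_of_lt_of_le one_pos (le_max_left _ _), fun z hz => ?_⟩
  by_contra hcon
  push_neg at hcon
  have h1 : (1 : ℝ) ≤ ‖z‖ := le_of_lt (lt_of_le_of_lt (le_max_left _ _) hcon)
  have h2 : C + M + 1 < ‖z‖ := lt_of_le_of_lt (le_max_right _ _) hcon
  have h3 : ‖z‖ - C ≤ ‖z + cc d a‖ := by
    have := norm_add_le (z + cc d a) (-(cc d a))
    simp only [add_neg_cancel_right, norm_neg] at this
    linarith
  have h4 : (1 : ℝ) ≤ ‖z‖ ^ (d - 1) := one_le_pow₀ h1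
  have h5 : ‖fpoly d a z‖ = ‖z‖ ^ (d - 1) * ‖z + cc d a‖ := by
    rw [fpoly_eq, norm_mul, norm_pow]
  have h6 : ‖z‖ - C ≤ ‖fpoly d a z‖ := by
    rw [h5]
    calc ‖z‖ - C ≤ ‖z + cc d a‖ := h3
      _ = 1 * ‖z + cc d a‖ := (one_mul _).symm
      _ ≤ ‖z‖ ^ (d - 1) * ‖z + cc d a‖ := by
          apply mul_le_mul_of_nonneg_right h4 (norm_nonneg _)
  linarith

/-- The set of `w ∈ immBasin` admitting `d-1` distinct preimages inside `immBasin`. -/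
def Aset (d : ℕ) (a : ℂ) : Set ℂ :=
  {w | w ∈ immBasin d a ∧ w ≠ 0 ∧ ∃ zs : Fin (d - 1) → ℂ,
    Function.Injective zs ∧ ∀ i, zs i ∈ immBasin d a ∧ fpoly d a (zs i) = w}

lemma Aset_open (hd : 3 ≤ d) (ha : a ≠ 0) (hnA : -a ∉ immBasin d a) {w₀ : ℂ}
    (hw₀ : w₀ ∈ Aset d a) :
    ∃ U : Set ℂ, IsOpen U ∧ w₀ ∈ U ∧ immBasin d a ∩ U ⊆ Aset d a := by
  obtain ⟨hw₀V, hw₀0, zs, hinj, hzs⟩ := hw₀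
  classical
  have hzV : ∀ i, zs i ∈ immBasin d a := fun i => (hzs i).1
  have hzf : ∀ i, fpoly d a (zs i) = w₀ := fun i => (hzs i).2
  have hz0 : ∀ i, zs i ≠ 0 := by
    intro i h
    apply hw₀0
    rw [← hzf i, h, fpoly_zero hd]
  have hza : ∀ i, zs i ≠ -a := fun i h => hnA (h ▸ hzV i)
  -- minimal gap between the distinct preimages
  set P := (Finset.univ : Finset (Fin (d - 1) × Fin (d - 1))).filter
    (fun p => p.1 ≠ p.2) with hP
  have hPne : P.Nonempty := by
    refine ⟨(⟨0, by omega⟩, ⟨1, by omega⟩), ?_⟩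
    simp only [hP, Finset.mem_filter, Finset.mem_univ, true_and]
    intro hcontra
    exact absurd (congrArg Fin.val hcontra) (by norm_num)
  set m := (P.inf' hPne fun p => dist (zs p.1) (zs p.2)) / 3 with hm
  have hmpos : 0 < m := by
    rw [hm]
    have hpos : ∀ p ∈ P, 0 < dist (zs p.1) (zs p.2) := fun p hp =>
      dist_pos.mpr fun h => (Finset.mem_filter.mp hp).2 (hinj h)
    have := (Finset.lt_inf'_iff hPne).mpr hpos
    linarith
  have hgap : ∀ i j, i ≠ j → 3 * m ≤ dist (zs i) (zs j) := by
    intro i j hij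
    have hmem : (i, j) ∈ P := by
      simp only [hP, Finset.mem_filter, Finset.mem_univ, true_and]; exact hij
    have := Finset.inf'_le (fun p => dist (zs p.1) (zs p.2)) hmem
    rw [hm]; linarith
  -- radii inside the immediate basin
  have hrad : ∀ i, ∃ r > 0, ball (zs i) r ⊆ immBasin d a := fun i =>
    Metric.isOpen_iff.mp (isOpen_immBasin hd) _ (hzV i)
  choose r hrpos hrsub using hrad
  -- local surjectivity
  have hsurj : ∀ i, ∃ ρ > 0, ∀ w ∈ ball (fpoly d a (zs i)) ρ,
      ∃ z ∈ ball (zs i) (min (r i) m), fpoly d a z = w := fun i =>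
    loc_surj (hasStrictDerivAt_fpoly hd (zs i)) (deriv_ne hd (hz0 i) (hza i))
      (lt_min (hrpos i) hmpos)
  choose ρ hρpos hρ using hsurj
  set ρ₀ := min ((Finset.univ : Finset (Fin (d - 1))).inf' ⟨⟨0, by omega⟩, Finset.mem_univ _⟩ ρ)
    ‖w₀‖ with hρ₀
  have hρ₀pos : 0 < ρ₀ := by
    rw [hρ₀]
    apply lt_min _ (norm_pos_iff.mpr hw₀0)
    refine (Finset.lt_inf'_iff _).mpr ?_
    exact fun i _ => hρpos i
  refine ⟨ball w₀ ρ₀, isOpen_ball, mem_ball_self hρ₀pos, fun w hw => ?_⟩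
  obtain ⟨hwV, hwU⟩ := hw
  have hw0 : w ≠ 0 := by
    intro h
    rw [h, mem_ball, dist_zero_left] at hwU
    exact absurd (min_le_right _ _ : ρ₀ ≤ ‖w₀‖) (not_le.mpr (lt_of_le_of_lt (le_refl _) hwU))
  have hwball : ∀ i, w ∈ ball (fpoly d a (zs i)) (ρ i) := by
    intro i
    rw [hzf i, mem_ball]
    calc dist w w₀ < ρ₀ := hwU
      _ ≤ (Finset.univ : Finset (Fin (d - 1))).inf' _ ρ := min_le_left _ _
      _ ≤ ρ i := Finset.inf'_le _ (Finset.mem_univ i)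
  choose ys hysball hysf using fun i => hρ i w (hwball i)
  refine ⟨hwV, hw0, ys, ?_, fun i => ⟨hrsub i (ball_subset_ball (min_le_left _ _) (hysball i)),
    hysf i⟩⟩
  intro i j hij
  by_contra hne
  have h1 : dist (ys i) (zs i) < m := lt_of_lt_of_le (mem_ball.mp (hysball i)) (min_le_right _ _)
  have h2 : dist (ys j) (zs j) < m := lt_of_lt_of_le (mem_ball.mp (hysball j)) (min_le_right _ _)
  have h3 := hgap i j hne
  have h4 := dist_triangle4 (zs i) (ys i) (ys j) (zs j)
  have h5 : dist (ys i) (ys j) = 0 := by rw [hij, dist_self]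
  rw [dist_comm (ys i) (zs i)] at h1
  linarith

lemma Aset_closed (hd : 3 ≤ d) (ha : a ≠ 0) (hca : -a ∉ closure (immBasin d a)) {w₀ : ℂ}
    (hw₀V : w₀ ∈ immBasin d a) (hw₀0 : w₀ ≠ 0) (hcl : w₀ ∈ closure (Aset d a)) :
    w₀ ∈ Aset d a := by
  classical
  obtain ⟨w, hwA, hwlim⟩ := mem_closure_iff_seq_limit.mp hcl
  choose hwV hw0 zs hinj hzs using hwA
  -- shift the sequence so that ‖w n‖ ≤ ‖w₀‖ + 1
  obtain ⟨R, hRpos, hR⟩ := preimage_bound (a := a) hd (‖w₀‖ + 1)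
  have hev : ∀ᶠ n in atTop, ‖w n‖ ≤ ‖w₀‖ + 1 :=
    hwlim.norm.eventually (eventually_le_nhds (by linarith [norm_nonneg w₀]))
  obtain ⟨N, hN⟩ := hev.exists_forall_of_atTop
  set w' : ℕ → ℂ := fun n => w (n + N) with hw'
  set T : ℕ → Fin (d - 1) → ℂ := fun n => zs (n + N) with hTdef
  have hw'lim : Tendsto w' atTop (nhds w₀) := (tendsto_add_atTop_iff_nat N).mpr hwlim
  have hTmem : ∀ n, T n ∈ Set.pi Set.univ (fun _ : Fin (d - 1) => closedBall (0 : ℂ) R) := by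
    intro n
    rw [Set.mem_pi]
    intro i _
    rw [mem_closedBall, dist_zero_right]
    apply hR
    rw [(hzs (n + N) i).2]
    exact hN (n + N) (by omega)
  have hcomp : IsCompact (Set.pi Set.univ (fun _ : Fin (d - 1) => closedBall (0 : ℂ) R)) :=
    isCompact_univ_pi fun _ => isCompact_closedBall _ _
  obtain ⟨L, _, φ, hφmono, hφtend⟩ := hcomp.tendsto_subseq hTmem
  have hcompTend : ∀ i, Tendsto (fun n => T (φ n) i) atTop (nhds (L i)) := by
    intro i
    exact (tendsto_pi_nhds.mp hφtend) i
  have hwφlim : Tendsto (fun n => w' (φ n)) atTop (nhds w₀) :=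
    hw'lim.comp hφmono.tendsto_atTop
  have hfL : ∀ i, fpoly d a (L i) = w₀ := by
    intro i
    have h1 : Tendsto (fun n => fpoly d a (T (φ n) i)) atTop (nhds (fpoly d a (L i))) :=
      (continuous_fpoly.tendsto (L i)).comp (hcompTend i)
    have h2 : (fun n => fpoly d a (T (φ n) i)) = fun n => w' (φ n) := by
      funext n
      exact (hzs (φ n + N) i).2
    rw [h2] at h1
    exact tendsto_nhds_unique h1 hwφlim
  have hLclos : ∀ i, L i ∈ closure (immBasin d a) := by
    intro i
    exact mem_closure_of_tendsto (hcompTend i)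
      (Filter.Eventually.of_forall fun n => (hzs (φ n + N) i).1)
  have hLbasin : ∀ i, L i ∈ basin d a := by
    intro i
    rw [← fpoly_mem_basin_iff, hfL i]
    exact immBasin_subset hw₀V
  have hLV : ∀ i, L i ∈ immBasin d a := fun i =>
    mem_immBasin_of_closure hd (hLbasin i) (hLclos i)
  have hLa : ∀ i, L i ≠ -a := fun i h => hca (h ▸ hLclos i)
  have hL0 : ∀ i, L i ≠ 0 := by
    intro i h
    apply hw₀0
    rw [← hfL i, h, fpoly_zero hd]
  have hLinj : Function.Injective L := by
    intro i j hij
    by_contra hne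
    obtain ⟨ρ, hρpos, hρinj⟩ :=
      loc_inj (hasStrictDerivAt_fpoly hd (L i)) (deriv_ne hd (hL0 i) (hLa i))
    have hev1 := (hcompTend i).eventually_mem (ball_mem_nhds (L i) hρpos)
    have hev2 : ∀ᶠ n in atTop, T (φ n) j ∈ ball (L i) ρ := by
      rw [hij]
      exact (hcompTend j).eventually_mem (ball_mem_nhds (L j) hρpos)
    obtain ⟨n, h1, h2⟩ := (hev1.and hev2).exists
    have heq : fpoly d a (T (φ n) i) = fpoly d a (T (φ n) j) := by
      rw [(hzs (φ n + N) i).2, (hzs (φ n + N) j).2]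
    exact hne (hinj (φ n + N) (hρinj h1 h2 heq))
  exact ⟨hw₀V, hw₀0, L, hLinj, fun i => ⟨hLV i, hfL i⟩⟩

end Stmt8

open Stmt8 in
/-- If the critical value `f_a(-a)` lies in the immediate basin `B_a` of `0`,
then so does the critical point `-a`. -/
theorem stmt8 (d : ℕ) (hd : 3 ≤ d) (a : ℂ) (h : fpoly d a (-a) ∈ immBasin d a) :
    -a ∈ immBasin d a := by
  by_cases ha : a = 0
  · rw [ha, neg_zero]
    exact zero_mem_immBasin hd
  by_contra hnA
  have hfaV : fpoly d a (-a) ∈ immBasin d a := h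
  have hfabasin : fpoly d a (-a) ∈ basin d a := immBasin_subset hfaV
  have hna_basin : -a ∈ basin d a := fpoly_mem_basin_iff.mp hfabasin
  have hca : -a ∉ closure (immBasin d a) := fun hc =>
    hnA (mem_immBasin_of_closure hd hna_basin hc)
  have h1 : -a + cc d a ≠ 0 := by
    intro hzero
    have h2 : cc d a = a := by linear_combination hzero
    have h3 := cc_mul (a := a) hd
    rw [h2] at h3
    exact ha (by linear_combination -h3)
  have hfa0 : fpoly d a (-a) ≠ 0 := by
    rw [fpoly_eq]
    exact mul_ne_zero (pow_ne_zero _ (neg_ne_zero.mpr ha)) h1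
  classical
  set B : Set ℂ := insert (0 : ℂ) (Aset d a) with hB
  have hop : ∀ w₁ ∈ B, ∃ U : Set ℂ, IsOpen U ∧ w₁ ∈ U ∧ immBasin d a ∩ U ⊆ B := by
    intro w₁ hw₁
    rcases Set.mem_insert_iff.mp hw₁ with h0 | hA
    · subst h0
      obtain ⟨ε, hεpos, hεsub⟩ := Metric.isOpen_iff.mp (isOpen_immBasin hd) 0
        (zero_mem_immBasin hd)
      obtain ⟨δ, hδpos, hδ⟩ := preimages_near_zero hd ha hεpos
      refine ⟨ball 0 (min δ ε), isOpen_ball, mem_ball_self (lt_min hδpos hεpos), ?_⟩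
      rintro v ⟨hvV, hvB⟩
      by_cases hv0 : v = 0
      · exact Set.mem_insert_iff.mpr (Or.inl hv0)
      refine Set.mem_insert_iff.mpr (Or.inr ?_)
      have hvδ : ‖v‖ < δ := by
        have hmem := mem_ball.mp hvB
        rw [dist_zero_right] at hmem
        exact lt_of_lt_of_le hmem (min_le_left _ _)
      obtain ⟨zs, hinj, hzs⟩ := hδ v hv0 hvδ
      exact ⟨hvV, hv0, zs, hinj, fun i => ⟨hεsub ((hzs i).1), (hzs i).2⟩⟩
    · obtain ⟨U, hU1, hU2, hU3⟩ := Aset_open hd ha hnA hA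
      exact ⟨U, hU1, hU2, fun v hv => Set.mem_insert_iff.mpr (Or.inr (hU3 hv))⟩
  choose U hUopen hUmem hUsub using hop
  set O₁ : Set ℂ := ⋃ (w₁ : ℂ) (hw₁ : w₁ ∈ B), U w₁ hw₁ with hO₁
  have hO₁open : IsOpen O₁ := isOpen_iUnion fun w₁ => isOpen_iUnion fun hw₁ => hUopen w₁ hw₁
  have hBsubO₁ : B ⊆ O₁ := fun w₁ hw₁ =>
    Set.mem_iUnion.mpr ⟨w₁, Set.mem_iUnion.mpr ⟨hw₁, hUmem w₁ hw₁⟩⟩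
  have hVO₁B : immBasin d a ∩ O₁ ⊆ B := by
    rintro v ⟨hvV, hvO⟩
    simp only [hO₁, Set.mem_iUnion] at hvO
    obtain ⟨w₁, hw₁, hvU⟩ := hvO
    exact hUsub w₁ hw₁ ⟨hvV, hvU⟩
  have hclosed : immBasin d a ∩ closure B ⊆ B := by
    rintro v ⟨hvV, hvcl⟩
    by_cases hv0 : v = 0
    · exact Set.mem_insert_iff.mpr (Or.inl hv0)
    refine Set.mem_insert_iff.mpr (Or.inr ?_)
    rw [hB, Set.insert_eq, closure_union, closure_singleton] at hvcl
    rcases (Set.mem_union _ _ _).mp hvcl with h' | h'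
    · exact absurd (Set.mem_singleton_iff.mp h') hv0
    exact Aset_closed hd ha hca hvV hv0 h'
  set O₂ : Set ℂ := (closure B)ᶜ with hO₂
  have hVcover : immBasin d a ⊆ O₁ ∪ O₂ := by
    intro v hv
    by_cases hvc : v ∈ closure B
    · exact Or.inl (hBsubO₁ (hclosed ⟨hv, hvc⟩))
    · exact Or.inr hvc
  have hpre : IsPreconnected (immBasin d a) := isPreconnected_connectedComponentIn
  have hO₂empty : ¬(immBasin d a ∩ O₂).Nonempty := by
    intro hne
    obtain ⟨v, hvV, hvO₁, hvO₂⟩ := hpre O₁ O₂ hO₁open (isOpen_compl_iff.mpr isClosed_closure)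
      hVcover ⟨0, zero_mem_immBasin hd, hBsubO₁ (Set.mem_insert_iff.mpr (Or.inl rfl))⟩ hne
    exact hvO₂ (subset_closure (hVO₁B ⟨hvV, hvO₁⟩))
  have hVB : immBasin d a ⊆ B := by
    intro v hv
    rcases hVcover hv with h' | h'
    · exact hVO₁B ⟨hv, h'⟩
    · exact absurd ⟨v, hv, h'⟩ hO₂empty
  have hfaB : fpoly d a (-a) ∈ B := hVB hfaV
  rcases Set.mem_insert_iff.mp hfaB with h' | h'
  · exact hfa0 h'
  obtain ⟨_, _, zs, hinj, hzs⟩ := h'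
  exact root_count hd ha hinj (fun i => (hzs i).2) (fun i hzi => hnA (hzi ▸ (hzs i).1))
end

section
/- Asymptotically as |a| → ∞, the Böttcher coordinate of the critical value satisfies Φ_∞(a) = φ_a^∞(f_a(-a)) ~ -(-a)^d/(d-1); consequently the proper holomorphic map Φ_∞ : ℋ_∞ ∪ {∞} → (ℂ̄ \ 𝔻̄) has local degree d at ∞. -/
open Complex Filter


/-- `F_a(z) = f_a(z)/z^d = 1 + d·a/((d-1)z)`. -/
noncomputable def Fcoef (d : ℕ) (a z : ℂ) : ℂ :=
  1 + (d : ℂ) * a / (((d : ℂ) - 1) * z)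



lemma hdC (d : ℕ) (hd : 3 ≤ d) : ((d:ℂ) - 1) ≠ 0 := by
  have h3 : (3:ℝ) ≤ (d:ℝ) := by exact_mod_cast hd
  intro h
  have : ((d:ℝ) - 1 : ℝ) = 0 := by
    have := congrArg Complex.re h
    simpa using this
  linarith

lemma fa_neg_a (d : ℕ) (hd : 3 ≤ d) (a : ℂ) :
    fpoly d a (-a) = -(-a) ^ d / ((d:ℂ) - 1) := by
  obtain ⟨e, rfl⟩ : ∃ e, d = e + 1 := ⟨d - 1, by omega⟩
  have h := hdC (e+1) hd
  have he : (e:ℂ) ≠ 0 := by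
    intro h0
    apply h
    push_cast
    rw [h0]; ring
  simp only [fpoly, Nat.add_sub_cancel, pow_succ]
  have h' : ((e:ℂ) + 1) - 1 = (e:ℂ) := by ring
  push_cast
  rw [h']
  field_simp
  ring

lemma abs_dm1 (d : ℕ) (hd : 3 ≤ d) : ‖(d:ℂ) - 1‖ = (d:ℝ) - 1 := by
  have h3 : (3:ℝ) ≤ (d:ℝ) := by exact_mod_cast hd
  have : ((d:ℂ) - 1) = (((d:ℝ) - 1 : ℝ) : ℂ) := by push_cast; ring
  rw [this, Complex.norm_real, Real.norm_eq_abs, abs_of_pos (by linarith)]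


lemma abs_coef (d : ℕ) (hd : 3 ≤ d) (a : ℂ) :
    ‖(d:ℂ) * a / ((d:ℂ) - 1)‖ = (d:ℝ) * ‖a‖ / ((d:ℝ) - 1) := by
  rw [norm_div, norm_mul, abs_dm1 d hd, Complex.norm_natCast]

lemma step (d : ℕ) (hd : 3 ≤ d) (a z : ℂ)
    (hz2 : 2 * ‖a‖ ≤ ‖z‖) (hz16 : 16 ≤ ‖z‖) :
    4 * ‖z‖ ≤ ‖fpoly d a z‖ := by
  have h3 : (3:ℝ) ≤ (d:ℝ) := by exact_mod_cast hd
  set A := ‖a‖ with hA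
  set Z := ‖z‖ with hZ
  have hA0 : 0 ≤ A := norm_nonneg a
  have hcoef : ‖(d:ℂ) * a / ((d:ℂ) - 1)‖ ≤ (3/4) * Z := by
    rw [abs_coef d hd]
    rw [div_le_iff₀ (by linarith)]
    nlinarith
  have h1 : Z/4 ≤ ‖z + (d:ℂ) * a / ((d:ℂ) - 1)‖ := by
    have h2 := norm_add_le (z + (d:ℂ) * a / ((d:ℂ) - 1)) (-((d:ℂ) * a / ((d:ℂ) - 1)))
    simp only [add_neg_cancel_right, norm_neg] at h2
    linarith
  have hZ2 : Z^2 ≤ Z^(d-1) := by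
    apply pow_le_pow_right₀ (by linarith) (by omega)
  have hnn : (0:ℝ) ≤ Z^2 := sq_nonneg Z
  calc 4 * Z ≤ Z^2 * (Z/4) := by nlinarith
    _ ≤ Z^(d-1) * ‖z + (d:ℂ) * a / ((d:ℂ) - 1)‖ :=
        mul_le_mul hZ2 h1 (by linarith) (by positivity)
    _ = ‖fpoly d a z‖ := by rw [fpoly, norm_mul, norm_pow]

lemma growth (d : ℕ) (hd : 3 ≤ d) (a : ℂ) (ha : (d:ℝ) + 16 ≤ ‖a‖) (k : ℕ) :
    ‖a‖ ^ 2 * 4 ^ k ≤ ‖(fpoly d a)^[k] (fpoly d a (-a))‖ := by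
  have h3 : (3:ℝ) ≤ (d:ℝ) := by exact_mod_cast hd
  have hA16 : (16:ℝ) ≤ ‖a‖ := by linarith
  set A := ‖a‖ with hA
  induction k with
  | zero =>
    rw [Function.iterate_zero_apply, fa_neg_a d hd, norm_div, norm_neg, norm_pow,
      norm_neg, abs_dm1 d hd]
    rw [pow_zero, mul_one, le_div_iff₀ (by linarith)]
    calc A^2 * ((d:ℝ) - 1) ≤ A^2 * A := by nlinarith
      _ = A^3 := by ring
      _ ≤ A^d := pow_le_pow_right₀ (by linarith) hd
  | succ k ih =>
    rw [Function.iterate_succ_apply']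
    have h4k : (1:ℝ) ≤ 4^k := one_le_pow₀ (by norm_num)
    have hz2 : 2 * A ≤ ‖(fpoly d a)^[k] (fpoly d a (-a))‖ := by nlinarith
    have hz16 : 16 ≤ ‖(fpoly d a)^[k] (fpoly d a (-a))‖ := by nlinarith
    have := step d hd a _ hz2 hz16
    calc A^2 * 4^(k+1) = 4 * (A^2 * 4^k) := by ring
      _ ≤ 4 * ‖(fpoly d a)^[k] (fpoly d a (-a))‖ := by linarith
      _ ≤ _ := this


/-- bound on `|Fcoef - 1|` along the orbit. -/
lemma Fcoef_sub_one_bound (d : ℕ) (hd : 3 ≤ d) (a : ℂ)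
    (ha : (d:ℝ) + 16 ≤ ‖a‖) (k : ℕ) :
    ‖Fcoef d a ((fpoly d a)^[k] (fpoly d a (-a))) - 1‖
      ≤ 3 / (2 * ‖a‖) * (1/4 : ℝ)^k := by
  have h3 : (3:ℝ) ≤ (d:ℝ) := by exact_mod_cast hd
  set A := ‖a‖ with hA
  have hA16 : (16:ℝ) ≤ A := by linarith
  set z := (fpoly d a)^[k] (fpoly d a (-a)) with hz
  have hzb := growth d hd a ha k
  have h4k : (1:ℝ) ≤ 4^k := one_le_pow₀ (by norm_num)
  have hzpos : (0:ℝ) < ‖z‖ := by nlinarith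
  have heq : Fcoef d a z - 1 = (d:ℂ) * a / (((d:ℂ) - 1) * z) := by
    rw [Fcoef]; ring
  rw [heq, norm_div, norm_mul, norm_mul, abs_dm1 d hd, Complex.norm_natCast]
  rw [div_le_iff₀ (by nlinarith : (0:ℝ) < ((d:ℝ)-1) * ‖z‖)]
  have hrw : 3 / (2*A) * (1/4:ℝ)^k * (((d:ℝ)-1) * ‖z‖)
      = (3 * ((d:ℝ)-1) * ‖z‖) / (2 * A * 4^k) := by
    field_simp
    have h14 : (1/4:ℝ)^k * 4^k = 1 := by rw [← mul_pow]; norm_num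
    linear_combination ((d:ℝ) - 1) * h14
  rw [hrw, le_div_iff₀ (by positivity)]
  have key : 3 * ((d:ℝ)-1) * (A^2 * 4^k) ≤ 3 * ((d:ℝ)-1) * ‖z‖ := by
    apply mul_le_mul_of_nonneg_left hzb (by linarith)
  nlinarith [pow_pos (show (0:ℝ) < 4 by norm_num) k, sq_nonneg A]

lemma Fcoef_sub_one_half (d : ℕ) (hd : 3 ≤ d) (a : ℂ)
    (ha : (d:ℝ) + 16 ≤ ‖a‖) (k : ℕ) :
    ‖Fcoef d a ((fpoly d a)^[k] (fpoly d a (-a))) - 1‖ ≤ 1/2 := by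
  have h3 : (3:ℝ) ≤ (d:ℝ) := by exact_mod_cast hd
  have h := Fcoef_sub_one_bound d hd a ha k
  have h4k : (1/4:ℝ)^k ≤ 1 := pow_le_one₀ (by norm_num) (by norm_num)
  have hA16 : (16:ℝ) ≤ ‖a‖ := by linarith
  have : 3 / (2 * ‖a‖) * (1/4:ℝ)^k ≤ 3 / (2 * ‖a‖) * 1 := by
    apply mul_le_mul_of_nonneg_left h4k (by positivity)
  have h2 : 3 / (2 * ‖a‖) ≤ 1/2 := by
    rw [div_le_div_iff₀ (by linarith) (by norm_num)]
    linarith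
  linarith

lemma Fcoef_ne_zero (d : ℕ) (hd : 3 ≤ d) (a : ℂ)
    (ha : (d:ℝ) + 16 ≤ ‖a‖) (k : ℕ) :
    Fcoef d a ((fpoly d a)^[k] (fpoly d a (-a))) ≠ 0 := by
  intro h0
  have := Fcoef_sub_one_half d hd a ha k
  rw [h0] at this
  simp at this
  norm_num at this

/-- bound on the log terms. -/
lemma log_term_bound (d : ℕ) (hd : 3 ≤ d) (a : ℂ)
    (ha : (d:ℝ) + 16 ≤ ‖a‖) (k : ℕ) :
    ‖Complex.log (Fcoef d a ((fpoly d a)^[k] (fpoly d a (-a)))) * ((1:ℂ)/(d:ℂ)^(k+1))‖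
      ≤ 1 / ‖a‖ * (1/4:ℝ)^k := by
  have h3 : (3:ℝ) ≤ (d:ℝ) := by exact_mod_cast hd
  have hA16 : (16:ℝ) ≤ ‖a‖ := by linarith
  set w := Fcoef d a ((fpoly d a)^[k] (fpoly d a (-a))) with hw
  have hb := Fcoef_sub_one_bound d hd a ha k
  have hh := Fcoef_sub_one_half d hd a ha k
  have hlog : ‖Complex.log w‖ ≤ (3/2) * ‖w - 1‖ := by
    have := Complex.norm_log_one_add_half_le_self (z := w - 1) (by
      exact hh)
    rwa [add_sub_cancel] at this
  have hpow : ‖(1:ℂ)/(d:ℂ)^(k+1)‖ ≤ 1/3 := by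
    rw [norm_div, norm_one, norm_pow, Complex.norm_natCast]
    have hd1 : (3:ℝ) ≤ (d:ℝ)^(k+1) := by
      calc (3:ℝ) = 3^1 := by norm_num
        _ ≤ 3^(k+1) := pow_le_pow_right₀ (by norm_num) (by omega)
        _ ≤ (d:ℝ)^(k+1) := by gcongr
    rw [div_le_div_iff₀ (by linarith) (by norm_num)]
    linarith
  rw [norm_mul]
  have h1 : ‖Complex.log w‖ ≤ (3/2) * (3 / (2 * ‖a‖) * (1/4:ℝ)^k) := by
    calc ‖Complex.log w‖ ≤ (3/2) * ‖w-1‖ := hlog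
      _ ≤ _ := by
          nlinarith
  calc ‖Complex.log w‖ * ‖(1:ℂ)/(d:ℂ)^(k+1)‖
      ≤ ((3/2) * (3 / (2 * ‖a‖) * (1/4:ℝ)^k)) * (1/3) := by
        apply mul_le_mul h1 hpow (norm_nonneg _) (by positivity)
    _ ≤ 1 / ‖a‖ * (1/4:ℝ)^k := by
        have hu : (0:ℝ) ≤ (1/4:ℝ)^k := by positivity
        have hA : (0:ℝ) < ‖a‖ := by linarith
        have heq : (3/2) * (3 / (2 * ‖a‖) * (1/4:ℝ)^k) * (1/3)
            = (3/4) * (1 / ‖a‖ * (1/4:ℝ)^k) := by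
          field_simp
          ring
        rw [heq]
        have hx : (0:ℝ) ≤ 1 / ‖a‖ * (1/4:ℝ)^k := by positivity
        linarith


noncomputable def gfun (d : ℕ) (a : ℂ) : ℂ :=
  ∑' k : ℕ, Complex.log (Fcoef d a ((fpoly d a)^[k] (fpoly d a (-a)))) * ((1:ℂ)/(d:ℂ)^(k+1))

lemma summable_c (d : ℕ) (hd : 3 ≤ d) (a : ℂ) (ha : (d:ℝ) + 16 ≤ ‖a‖) :
    Summable (fun k : ℕ =>
      Complex.log (Fcoef d a ((fpoly d a)^[k] (fpoly d a (-a)))) * ((1:ℂ)/(d:ℂ)^(k+1))) := by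
  apply Summable.of_norm_bounded (g := fun k => 1 / ‖a‖ * (1/4:ℝ)^k)
  · exact (summable_geometric_of_lt_one (by norm_num) (by norm_num)).mul_left _
  · exact log_term_bound d hd a ha

lemma norm_gfun_le (d : ℕ) (hd : 3 ≤ d) (a : ℂ) (ha : (d:ℝ) + 16 ≤ ‖a‖) :
    ‖gfun d a‖ ≤ 2 / ‖a‖ := by
  have h3 : (3:ℝ) ≤ (d:ℝ) := by exact_mod_cast hd
  have hA : (0:ℝ) < ‖a‖ := by linarith
  have hgeo : HasSum (fun k : ℕ => 1 / ‖a‖ * (1/4:ℝ)^k)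
      (1 / ‖a‖ * (1 - 1/4)⁻¹) :=
    (hasSum_geometric_of_lt_one (by norm_num) (by norm_num)).mul_left _
  have := tsum_of_norm_bounded hgeo (log_term_bound d hd a ha)
  refine this.trans ?_
  rw [div_mul_eq_mul_div, div_le_div_iff₀ hA hA]
  norm_num
  nlinarith

lemma prod_eq_exp (d : ℕ) (hd : 3 ≤ d) (a : ℂ) (ha : (d:ℝ) + 16 ≤ ‖a‖) :
    (∏' k : ℕ, (Fcoef d a ((fpoly d a)^[k] (fpoly d a (-a)))) ^
        ((1 : ℂ) / (d : ℂ) ^ (k + 1))) = Complex.exp (gfun d a) := by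
  have hs := (summable_c d hd a ha).hasSum
  have hfun : (fun k : ℕ => (Fcoef d a ((fpoly d a)^[k] (fpoly d a (-a)))) ^
        ((1 : ℂ) / (d : ℂ) ^ (k + 1)))
      = fun k : ℕ => Complex.exp
        (Complex.log (Fcoef d a ((fpoly d a)^[k] (fpoly d a (-a)))) * ((1:ℂ)/(d:ℂ)^(k+1))) := by
    funext k
    rw [Complex.cpow_def_of_ne_zero (Fcoef_ne_zero d hd a ha k)]
  rw [hfun]
  exact (hs.cexp).tprod_eq

/-- The Böttcher coordinate of the critical value, given by the infinite product,
satisfies `Φ_∞(a) ~ -(-a)^d/(d-1)` as `|a| → ∞` within `ℋ_∞`; in particular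
`|Φ_∞(a)|/|a|^d → 1/(d-1)`, so `Φ_∞` has local degree `d` at `∞`. -/
theorem stmt14 (d : ℕ) (hd : 3 ≤ d) (Φ : ℂ → ℂ)
    (hΦ : ∀ a ∈ Hinf d, Φ a = fpoly d a (-a) *
      ∏' k : ℕ, (Fcoef d a ((fpoly d a)^[k] (fpoly d a (-a)))) ^
        ((1 : ℂ) / (d : ℂ) ^ (k + 1))) :
    Filter.Tendsto (fun a : ℂ => Φ a / (-(-a) ^ d / ((d : ℂ) - 1)))
      ((Filter.comap (fun z : ℂ => ‖z‖) Filter.atTop) ⊓ Filter.principal (Hinf d))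
      (nhds 1) ∧
    Filter.Tendsto (fun a : ℂ => ‖Φ a‖ / ‖a‖ ^ d)
      ((Filter.comap (fun z : ℂ => ‖z‖) Filter.atTop) ⊓ Filter.principal (Hinf d))
      (nhds (1 / ((d : ℝ) - 1))) := by
  have h3 : (3:ℝ) ≤ (d:ℝ) := by exact_mod_cast hd
  set L := (Filter.comap (fun z : ℂ => ‖z‖) Filter.atTop) ⊓ Filter.principal (Hinf d) with hL
  have habs : Tendsto (fun z : ℂ => ‖z‖) L atTop := tendsto_comap.mono_left inf_le_left
  have hev1 : ∀ᶠ a in L, (d:ℝ) + 16 ≤ ‖a‖ :=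
    habs.eventually (eventually_ge_atTop _)
  have hev2 : ∀ᶠ a in L, a ∈ Hinf d :=
    eventually_inf_principal.mpr (Eventually.of_forall fun a h => h)
  -- eventual identity
  have keyeq : ∀ᶠ a in L, Φ a / (-(-a) ^ d / ((d:ℂ) - 1)) = Complex.exp (gfun d a) := by
    filter_upwards [hev1, hev2] with a ha hH
    have ha0 : a ≠ 0 := by
      intro h0
      rw [h0] at ha
      simp at ha
      linarith
    have hne : fpoly d a (-a) ≠ 0 := by
      rw [fa_neg_a d hd]
      exact div_ne_zero (neg_ne_zero.mpr (pow_ne_zero _ (neg_ne_zero.mpr ha0))) (hdC d hd)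
    rw [hΦ a hH, ← fa_neg_a d hd, prod_eq_exp d hd a ha]
    exact mul_div_cancel_left₀ _ hne
  -- gfun → 0
  have hg : Tendsto (fun a => gfun d a) L (nhds 0) := by
    refine squeeze_zero_norm' (a := fun x : ℂ => 2 / ‖x‖) ?_
      (tendsto_const_nhds.div_atTop habs)
    filter_upwards [hev1] with a ha using norm_gfun_le d hd a ha
  have h1 : Tendsto (fun a => Complex.exp (gfun d a)) L (nhds 1) := by
    have := (Complex.continuous_exp.tendsto 0).comp hg
    simpa [Function.comp_def] using this
  have first : Tendsto (fun a : ℂ => Φ a / (-(-a) ^ d / ((d:ℂ) - 1))) L (nhds 1) :=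
    h1.congr' (keyeq.mono fun a h => h.symm)
  refine ⟨first, ?_⟩
  have habs1 : Tendsto (fun a : ℂ => ‖Φ a / (-(-a) ^ d / ((d:ℂ) - 1))‖) L
      (nhds 1) := by
    have := (continuous_norm.tendsto 1).comp first
    simpa only [Function.comp_def, norm_one] using this
  have h2 : Tendsto (fun a : ℂ => ‖Φ a / (-(-a) ^ d / ((d:ℂ) - 1))‖
      * (1/((d:ℝ)-1))) L (nhds (1 * (1/((d:ℝ)-1)))) := habs1.mul_const _
  rw [one_mul] at h2
  apply h2.congr'
  filter_upwards [hev1] with a ha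
  have hA : (0:ℝ) < ‖a‖ := by linarith
  have hwabs : ‖-(-a) ^ d / ((d:ℂ) - 1)‖ = ‖a‖ ^ d / ((d:ℝ)-1) := by
    rw [norm_div, norm_neg, norm_pow, norm_neg, abs_dm1 d hd]
  rw [norm_div, hwabs]
  have hApow : (0:ℝ) < ‖a‖ ^ d := by positivity
  field_simp
  exact mul_div_cancel_right₀ _ (ne_of_gt (by linarith))
end

section
/- For a ∈ ℝ with a > 0 small enough, the critical point -a lies in the immediate basin B_a of 0; i.e. the positive real axis near 0 is contained in the central component ℋ_0 = {a : -a ∈ B_a}. -/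
/-- For small real `a > 0`, the critical point `-a` lies in the immediate basin of `0`:
the positive real axis near `0` is contained in the central component `ℋ₀`. -/
theorem stmt15 (d : ℕ) (hd : 3 ≤ d) :
    ∃ ε : ℝ, 0 < ε ∧ ∀ a : ℝ, 0 < a → a < ε →
      (-(a : ℂ)) ∈ immBasin d (a : ℂ) := by
  refine ⟨1/4, by norm_num, fun a ha haε => ?_⟩
  have ha2 : 2 * a ≤ 1 := by linarith
  have hdr : (2:ℝ) ≤ (d:ℝ) := by
    have : (3:ℝ) ≤ (d:ℝ) := by exact_mod_cast hd
    linarith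
  -- key contraction bound on the closed ball of radius 2a
  have key : ∀ w : ℂ, ‖w‖ ≤ 2*a →
      ‖fpoly d a w‖ ≤ (1/2) * ‖w‖ := by
    intro w hw
    have hwnn : 0 ≤ ‖w‖ := norm_nonneg w
    have habs : ‖fpoly d a w‖
        = ‖w‖ ^ (d-1) * ‖w + (d:ℂ) * a / ((d:ℂ) - 1)‖ := by
      simp [fpoly, map_mul, map_pow]
    have hc : ((d:ℂ) * (a:ℂ) / ((d:ℂ) - 1)) = (((d:ℝ) * a / ((d:ℝ) - 1) : ℝ) : ℂ) := by
      push_cast; ring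
    have hcabs : ‖(d:ℂ) * (a:ℂ) / ((d:ℂ) - 1)‖ = (d:ℝ) * a / ((d:ℝ) - 1) := by
      rw [hc, Complex.norm_real, Real.norm_eq_abs, abs_of_nonneg]
      apply div_nonneg <;> nlinarith
    have hfrac : (d:ℝ) * a / ((d:ℝ) - 1) ≤ 2 * a := by
      rw [div_le_iff₀ (by linarith)]
      nlinarith
    have hB : ‖w + (d:ℂ) * a / ((d:ℂ) - 1)‖ ≤ 4 * a := by
      calc ‖w + (d:ℂ) * a / ((d:ℂ) - 1)‖
          ≤ ‖w‖ + ‖(d:ℂ) * a / ((d:ℂ) - 1)‖ := norm_add_le _ _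
        _ ≤ 2*a + 2*a := by rw [hcabs]; exact add_le_add hw hfrac
        _ = 4*a := by ring
    have hd1 : d - 1 = (d - 2) + 1 := by omega
    have hpow : ‖w‖ ^ (d-1) ≤ (2*a) * ‖w‖ := by
      rw [hd1, pow_succ]
      have h1 : ‖w‖ ^ (d-2) ≤ (2*a) ^ (d-2) := pow_le_pow_left₀ hwnn hw _
      have h2 : (2*a) ^ (d-2) ≤ (2*a) ^ 1 :=
        pow_le_pow_of_le_one (by linarith) ha2 (by omega)
      have h3 : ‖w‖ ^ (d-2) ≤ 2*a := by
        calc ‖w‖ ^ (d-2) ≤ (2*a)^(d-2) := h1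
          _ ≤ (2*a)^1 := h2
          _ = 2*a := pow_one _
      exact mul_le_mul_of_nonneg_right h3 hwnn
    calc ‖fpoly d a w‖
        = ‖w‖ ^ (d-1) * ‖w + (d:ℂ) * a / ((d:ℂ) - 1)‖ := habs
      _ ≤ ((2*a) * ‖w‖) * (4*a) := by
          apply mul_le_mul hpow hB (norm_nonneg _)
          positivity
      _ = (8*a^2) * ‖w‖ := by ring
      _ ≤ (1/2) * ‖w‖ := by
          have h8 : 8*a^2 ≤ 1/2 := by nlinarith
          nlinarith [mul_le_mul_of_nonneg_right h8 hwnn]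
  -- iterated bound
  have iter : ∀ z : ℂ, ‖z‖ ≤ 2*a → ∀ n : ℕ,
      ‖(fpoly d a)^[n] z‖ ≤ (1/2)^n * ‖z‖ := by
    intro z hz n
    induction n with
    | zero => simp
    | succ n ih =>
      rw [Function.iterate_succ_apply']
      have hle : ‖(fpoly d a)^[n] z‖ ≤ 2*a := by
        have h1 : (1/2:ℝ)^n ≤ 1 := pow_le_one₀ (by norm_num) (by norm_num)
        nlinarith [norm_nonneg z]
      calc ‖fpoly d a ((fpoly d a)^[n] z)‖
          ≤ (1/2) * ‖(fpoly d a)^[n] z‖ := key _ hle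
        _ ≤ (1/2) * ((1/2)^n * ‖z‖) := by linarith
        _ = (1/2)^(n+1) * ‖z‖ := by ring
  -- ball ⊆ basin
  have hsub : Metric.closedBall (0:ℂ) (2*a) ⊆ basin d a := by
    intro z hz
    rw [Metric.mem_closedBall, dist_zero_right] at hz
    have hz' : ‖z‖ ≤ 2*a := hz
    have hlim : Filter.Tendsto (fun n : ℕ => (1/2:ℝ)^n * ‖z‖)
        Filter.atTop (nhds 0) := by
      have := tendsto_pow_atTop_nhds_zero_of_lt_one (by norm_num : (0:ℝ) ≤ 1/2)
        (by norm_num : (1/2:ℝ) < 1)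
      simpa using this.mul_const (‖z‖)
    rw [basin, Set.mem_setOf_eq, tendsto_zero_iff_norm_tendsto_zero]
    exact squeeze_zero (fun n => norm_nonneg _) (fun n => iter z hz' n) hlim
  -- conclude via connectedness of the ball
  have hconn : IsPreconnected (Metric.closedBall (0:ℂ) (2*a)) :=
    (convex_closedBall (0:ℂ) (2*a)).isPreconnected
  have h0 : (0:ℂ) ∈ Metric.closedBall (0:ℂ) (2*a) := by
    simp [Metric.mem_closedBall]; positivity
  have hma : (-(a:ℂ)) ∈ Metric.closedBall (0:ℂ) (2*a) := by
    rw [Metric.mem_closedBall, dist_zero_right]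
    simp only [norm_neg, Complex.norm_real, Real.norm_eq_abs, abs_of_pos ha]
    linarith
  exact hconn.subset_connectedComponentIn h0 hsub hma
end
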